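/- The four 32-element sets S_L = {±e_i : 0 ≤ i ≤ 15}, S_L^α = {±e_i : i ∈ {0,1,2,3,8,9,10,11,20,21,22,23,28,29,30,31}}, S_L^β = {±e_i : i ∈ {0,1,2,3,12,13,14,15,20,21,22,23,24,25,26,27}}, and S_L^γ = {±e_i : i ∈ {0,1,2,3,4,5,6,7,24,25,26,27,28,29,30,31}} are each subloops of T_L, and they are pairwise non-isomorphic. -/

import Mathlib

/-- Iterated Cayley–Dickson doubling starting from `ℝ`. -/
def CD : ℕ → Type
  | 0 => ℝ
  | n + 1 => CD n × CD n

instance cdAddCommGroup : ∀ n, AddCommGroup (CD n)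
  | 0 => inferInstanceAs (AddCommGroup ℝ)
  | n + 1 => letI := cdAddCommGroup n; inferInstanceAs (AddCommGroup (CD n × CD n))

noncomputable instance cdModule : ∀ n, Module ℝ (CD n)
  | 0 => inferInstanceAs (Module ℝ ℝ)
  | n + 1 => letI := cdModule n; inferInstanceAs (Module ℝ (CD n × CD n))

/-- Cayley–Dickson conjugation, starting from the identity on `ℝ`. -/
def cdConj : ∀ n, CD n → CD n
  | 0, x => x
  | n + 1, x => (cdConj n x.1, -x.2)

/-- Cayley–Dickson multiplication: `(a,b)(c,d) = (ac − d b̄, ā d + c b)`. -/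
def cdMul : ∀ n, CD n → CD n → CD n
  | 0, x, y => @Mul.mul ℝ _ x y
  | n + 1, x, y =>
      (cdMul n x.1 y.1 - cdMul n y.2 (cdConj n x.2),
       cdMul n (cdConj n x.1) y.2 + cdMul n y.1 x.2)

instance cdMulInst (n : ℕ) : Mul (CD n) := ⟨cdMul n⟩

instance cdOne : ∀ n, One (CD n)
  | 0 => ⟨(1 : ℝ)⟩
  | n + 1 => letI := cdOne n; ⟨((1 : CD n), 0)⟩

/-- The standard basis elements: under a doubling step `A → A × A`, a basis element
`e k` of `A` gives `e k = (e k, 0)` and `e (k + dim A) = (0, e k)`. -/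
def cdE : ∀ n, ℕ → CD n
  | 0, _ => (1 : ℝ)
  | n + 1, k => if k < 2 ^ n then (cdE n k, 0) else (0, cdE n (k - 2 ^ n))

/-- The trigintaduonions: the 32-dimensional real Cayley–Dickson algebra. -/
abbrev TT := CD 5

/-- The 32 standard basis elements `e 0 = 1, e 1, …, e 31` of `𝕋`. -/
def e (i : ℕ) : TT := cdE 5 i

/-- The trigintaduonion loop `T_L = {±e 0, ±e 1, …, ±e 31}`. -/
def TL : Set TT := {x | ∃ i < 32, x = e i ∨ x = -e i}

/-- A subloop of `T_L`: a nonempty subset of `T_L` closed under multiplication. -/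
def IsSubloop (N : Set TT) : Prop :=
  N ⊆ TL ∧ N.Nonempty ∧ ∀ x ∈ N, ∀ y ∈ N, x * y ∈ N

/-- Two subsets of `T_L` are isomorphic (as loops) if some bijection between them
preserves multiplication. -/
def LoopIso (A B : Set TT) : Prop :=
  ∃ f : TT → TT, Set.BijOn f A B ∧ ∀ x ∈ A, ∀ y ∈ A, f (x * y) = f x * f y

/-- The standard sedenion loop `S_L = {±e i : 0 ≤ i ≤ 15}`. -/
def SL : Set TT := {x | ∃ i < 16, x = e i ∨ x = -e i}

/-- Index set of the α-sedenion loop. -/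
def idxα : Set ℕ := {0, 1, 2, 3, 8, 9, 10, 11, 20, 21, 22, 23, 28, 29, 30, 31}

/-- Index set of the β-sedenion loop. -/
def idxβ : Set ℕ := {0, 1, 2, 3, 12, 13, 14, 15, 20, 21, 22, 23, 24, 25, 26, 27}

/-- Index set of the γ-sedenion loop. -/
def idxγ : Set ℕ := {0, 1, 2, 3, 4, 5, 6, 7, 24, 25, 26, 27, 28, 29, 30, 31}

/-- The α-sedenion loop `S_L^α`. -/
def SLα : Set TT := {x | ∃ i ∈ idxα, x = e i ∨ x = -e i}

/-- The β-sedenion loop `S_L^β`. -/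
def SLβ : Set TT := {x | ∃ i ∈ idxβ, x = e i ∨ x = -e i}

/-- The γ-sedenion loop `S_L^γ`. -/
def SLγ : Set TT := {x | ∃ i ∈ idxγ, x = e i ∨ x = -e i}

/-- The octonion loop `O_L = {±e i : 0 ≤ i ≤ 7}`. -/
def OL : Set TT := {x | ∃ i < 8, x = e i ∨ x = -e i}

/-- The quasi-octonion loop `Õ_L = {±e i : i ∈ {0,1,2,3,12,13,14,15}}`. -/
def QOL : Set TT :=
  {x | ∃ i ∈ ({0, 1, 2, 3, 12, 13, 14, 15} : Set ℕ), x = e i ∨ x = -e i}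

section Aux

lemma cd_zero_def (n : ℕ) : (0 : CD (n+1)) = ((0 : CD n), (0 : CD n)) := rfl
lemma cd_neg_def (n : ℕ) (x : CD (n+1)) : -x = (-x.1, -x.2) := rfl
lemma cd_mk_eq (n : ℕ) (a b c d : CD n) :
    @Eq (CD (n+1)) (a, b) (c, d) ↔ a = c ∧ b = d := by
  constructor
  · intro h; exact ⟨congrArg Prod.fst h, congrArg Prod.snd h⟩
  · rintro ⟨rfl, rfl⟩; rfl

lemma cd_neg_mk (n : ℕ) (a b : CD n) : @Neg.neg (CD (n+1)) _ (a, b) = (-a, -b) := rfl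

lemma cdE_succ (n i : ℕ) : cdE (n+1) i =
    (if i < 2^n then ((cdE n i, (0:CD n)) : CD n × CD n)
      else (((0:CD n), cdE n (i - 2^n)) : CD n × CD n) : CD n × CD n) := rfl

lemma cdConj_zero : ∀ n, cdConj n 0 = 0
  | 0 => rfl
  | n + 1 => by
      show (cdConj n (0:CD n), -(0:CD n)) = ((0:CD n), (0:CD n))
      rw [cdConj_zero n, neg_zero]

lemma cdConj_neg : ∀ n (x : CD n), cdConj n (-x) = -cdConj n x
  | 0, x => rfl
  | n + 1, x => by
      show (cdConj n (-x.1), -(-x.2)) = (-(cdConj n x.1), -(-x.2))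
      rw [cdConj_neg n]

lemma cdMul_zero' : ∀ n (x : CD n), cdMul n 0 x = 0 ∧ cdMul n x 0 = 0
  | 0, x => ⟨zero_mul (M₀ := ℝ) x, mul_zero (M₀ := ℝ) x⟩
  | n + 1, x => by
      constructor
      · show (cdMul n 0 x.1 - cdMul n x.2 (cdConj n 0), cdMul n (cdConj n 0) x.2 + cdMul n x.1 0)
          = ((0:CD n), (0:CD n))
        rw [cdConj_zero n, (cdMul_zero' n x.1).1, (cdMul_zero' n x.2).2,
          (cdMul_zero' n x.2).1, (cdMul_zero' n x.1).2, sub_zero, add_zero]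
      · show (cdMul n x.1 0 - cdMul n 0 (cdConj n x.2), cdMul n (cdConj n x.1) 0 + cdMul n 0 x.2)
          = ((0:CD n), (0:CD n))
        rw [(cdMul_zero' n x.1).2, (cdMul_zero' n (cdConj n x.2)).1,
          (cdMul_zero' n (cdConj n x.1)).2, (cdMul_zero' n x.2).1, sub_zero, add_zero]

lemma cdMul_neg' : ∀ n (x y : CD n), cdMul n (-x) y = -cdMul n x y ∧ cdMul n x (-y) = -cdMul n x y
  | 0, x, y => ⟨neg_mul (α := ℝ) x y, mul_neg (α := ℝ) x y⟩
  | n + 1, x, y => by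
      constructor
      · show (cdMul n (-x.1) y.1 - cdMul n y.2 (cdConj n (-x.2)),
              cdMul n (cdConj n (-x.1)) y.2 + cdMul n y.1 (-x.2))
          = (-(cdMul n x.1 y.1 - cdMul n y.2 (cdConj n x.2)),
             -(cdMul n (cdConj n x.1) y.2 + cdMul n y.1 x.2))
        rw [cdConj_neg n, cdConj_neg n, (cdMul_neg' n x.1 y.1).1,
          (cdMul_neg' n y.2 (cdConj n x.2)).2, (cdMul_neg' n (cdConj n x.1) y.2).1,
          (cdMul_neg' n y.1 x.2).2, Prod.mk.injEq]
        exact ⟨by abel, by abel⟩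
      · show (cdMul n x.1 (-y.1) - cdMul n (-y.2) (cdConj n x.2),
              cdMul n (cdConj n x.1) (-y.2) + cdMul n (-y.1) x.2)
          = (-(cdMul n x.1 y.1 - cdMul n y.2 (cdConj n x.2)),
             -(cdMul n (cdConj n x.1) y.2 + cdMul n y.1 x.2))
        rw [(cdMul_neg' n x.1 y.1).2, (cdMul_neg' n y.2 (cdConj n x.2)).1,
          (cdMul_neg' n (cdConj n x.1) y.2).2, (cdMul_neg' n y.1 x.2).1, Prod.mk.injEq]
        exact ⟨by abel, by abel⟩

lemma cdE_ne_zero : ∀ n i, cdE n i ≠ 0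
  | 0, _ => (one_ne_zero : (1:ℝ) ≠ 0)
  | n + 1, i => by
      intro h
      rw [cdE_succ, cd_zero_def] at h
      split at h <;> rw [cd_mk_eq] at h
      · exact cdE_ne_zero n i h.1
      · exact cdE_ne_zero n _ h.2
lemma neg_cdE_ne_zero (n i : ℕ) : -cdE n i ≠ 0 := fun h =>
  cdE_ne_zero n i (neg_eq_zero.mp h)

lemma cdE_inj' : ∀ n, ∀ i < 2^n, ∀ j < 2^n,
    (cdE n i = cdE n j → i = j) ∧ cdE n i ≠ -cdE n j
  | 0, i, hi, j, hj => by
      interval_cases i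
      interval_cases j
      exact ⟨fun _ => rfl, by
        intro h
        have : (1:ℝ) = -1 := h
        norm_num at this⟩
  | n + 1, i, hi, j, hj => by
      rw [pow_succ] at hi hj
      constructor
      · intro h
        rw [cdE_succ, cdE_succ] at h
        split at h <;> split at h <;> rw [cd_mk_eq] at h
        · next h1 h2 => exact (cdE_inj' n i h1 j h2).1 h.1
        · exact absurd h.1 (cdE_ne_zero n i)
        · exact absurd h.1.symm (cdE_ne_zero n j)
        · next h1 h2 =>
            have := (cdE_inj' n (i - 2^n) (by omega) (j - 2^n) (by omega)).1 h.2
            omega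
      · intro h
        rw [cdE_succ, cdE_succ] at h
        replace h := h.trans (cd_neg_def n _)
        split at h <;> split at h <;> rw [cd_mk_eq] at h <;> simp only [] at h
        · next h1 h2 => exact (cdE_inj' n i h1 j h2).2 h.1
        · exact absurd h.1 (fun hh => cdE_ne_zero n i (by rw [hh, neg_zero]))
        · exact absurd h.2 (fun hh => cdE_ne_zero n _ (by rw [hh, neg_zero]))
        · exact (cdE_inj' n (i - 2^n) (by omega) (j - 2^n) (by omega)).2 h.2

lemma cdConj_cdE : ∀ n, ∀ i < 2^n, cdConj n (cdE n i) = if i = 0 then cdE n i else -cdE n i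
  | 0, i, hi => by interval_cases i; rfl
  | n + 1, i, hi => by
      rw [pow_succ] at hi
      have hp : 0 < 2^n := Nat.pow_pos (by norm_num)
      by_cases h0 : i = 0
      · subst h0
        rw [if_pos rfl, cdE_succ, if_pos hp]
        show (cdConj n (cdE n 0), -(0:CD n)) = (cdE n 0, (0:CD n))
        rw [cdConj_cdE n 0 hp, if_pos rfl, neg_zero]
      · rw [if_neg h0, cdE_succ]
        by_cases h1 : i < 2^n
        · rw [if_pos h1]
          show (cdConj n (cdE n i), -(0:CD n)) = -(cdE n i, (0:CD n))
          rw [cdConj_cdE n i h1, if_neg h0, Prod.neg_mk, neg_zero]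
        · rw [if_neg h1]
          show (cdConj n 0, -cdE n (i - 2^n)) = -((0:CD n), cdE n (i - 2^n))
          rw [cdConj_zero n, Prod.neg_mk, neg_zero]
/-- Sign of `e i * e j` in `CD n` (`true` = `+`). -/
def sgn : ℕ → ℕ → ℕ → Bool
  | 0, _, _ => true
  | n+1, i, j =>
    if i < 2^n then
      if j < 2^n then sgn n i j
      else decide (i = 0) == sgn n i (j - 2^n)
    else
      if j < 2^n then sgn n j (i - 2^n)
      else !(decide (i - 2^n = 0) == sgn n (j - 2^n) (i - 2^n))

/-- Index of `± (e i * e j)` in `CD n`. -/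
def xr : ℕ → ℕ → ℕ → ℕ
  | 0, _, _ => 0
  | n+1, i, j =>
    if i < 2^n then
      if j < 2^n then xr n i j
      else xr n i (j - 2^n) + 2^n
    else
      if j < 2^n then xr n j (i - 2^n) + 2^n
      else xr n (j - 2^n) (i - 2^n)

lemma xr_lt : ∀ n i j, i < 2^n → j < 2^n → xr n i j < 2^n
  | 0, i, j, hi, hj => by simp only [xr]; simpa using hi
  | n+1, i, j, hi, hj => by
      rw [pow_succ] at hi hj ⊢
      rw [xr]
      by_cases h1 : i < 2^n <;> by_cases h2 : j < 2^n <;>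
        simp only [h1, h2, if_pos, if_neg, if_true, if_false]
      · have := xr_lt n i j h1 h2; omega
      · have := xr_lt n i (j - 2^n) h1 (by omega); omega
      · have := xr_lt n j (i - 2^n) h2 (by omega); omega
      · have := xr_lt n (j - 2^n) (i - 2^n) (by omega) (by omega); omega

lemma cdMul_cdE : ∀ n, ∀ i < 2^n, ∀ j < 2^n,
    cdMul n (cdE n i) (cdE n j) =
      if sgn n i j then cdE n (xr n i j) else -cdE n (xr n i j)
  | 0, i, hi, j, hj => by
      interval_cases i
      interval_cases j
      show (1:ℝ) * 1 = _
      norm_num [sgn, xr, cdE]; rfl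
  | n+1, i, hi, j, hj => by
      rw [pow_succ] at hi hj
      by_cases h1 : i < 2^n <;> by_cases h2 : j < 2^n
      · -- case 1
        have hx := xr_lt n i j h1 h2
        rw [cdE_succ, if_pos h1, cdE_succ, if_pos h2]
        show (cdMul n (cdE n i) (cdE n j) - cdMul n 0 (cdConj n 0),
              cdMul n (cdConj n (cdE n i)) 0 + cdMul n (cdE n j) 0) = _
        rw [cdConj_zero n, (cdMul_zero' n 0).1, (cdMul_zero' n _).2, (cdMul_zero' n _).2,
          sub_zero, add_zero, cdMul_cdE n i h1 j h2]
        rw [sgn, if_pos h1, if_pos h2, xr, if_pos h1, if_pos h2, cdE_succ, if_pos hx]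
        cases hs : sgn n i j <;> simp [cd_neg_mk]
      · -- case 2 : i < 2^n ≤ j
        have hj' : j - 2^n < 2^n := by omega
        have hx := xr_lt n i (j - 2^n) h1 hj'
        rw [cdE_succ, if_pos h1, cdE_succ, if_neg h2]
        show (cdMul n (cdE n i) 0 - cdMul n (cdE n (j - 2^n)) (cdConj n 0),
              cdMul n (cdConj n (cdE n i)) (cdE n (j - 2^n)) + cdMul n 0 0) = _
        rw [cdConj_zero n, (cdMul_zero' n _).2, (cdMul_zero' n _).2, (cdMul_zero' n 0).1,
          sub_zero, add_zero, cdConj_cdE n i h1]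
        rw [sgn, if_pos h1, if_neg h2, xr, if_pos h1, if_neg h2, cdE_succ,
          if_neg (by omega : ¬ xr n i (j - 2^n) + 2^n < 2^n),
          Nat.add_sub_cancel]
        by_cases h0 : i = 0
        · rw [if_pos h0, cdMul_cdE n i h1 (j - 2^n) hj']
          cases hs : sgn n i (j - 2^n) <;> simp [h0, hs, cd_neg_def, cd_neg_mk]
        · rw [if_neg h0, (cdMul_neg' n _ _).1, cdMul_cdE n i h1 (j - 2^n) hj']
          cases hs : sgn n i (j - 2^n) <;> simp [h0, hs, cd_neg_def, cd_neg_mk]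
      · -- case 3 : j < 2^n ≤ i
        have hi' : i - 2^n < 2^n := by omega
        have hx := xr_lt n j (i - 2^n) h2 hi'
        rw [cdE_succ, if_neg h1, cdE_succ, if_pos h2]
        show (cdMul n 0 (cdE n j) - cdMul n 0 (cdConj n (cdE n (i - 2^n))),
              cdMul n (cdConj n 0) 0 + cdMul n (cdE n j) (cdE n (i - 2^n))) = _
        rw [cdConj_zero n, (cdMul_zero' n _).1, (cdMul_zero' n _).1, (cdMul_zero' n 0).2,
          sub_zero, zero_add, cdMul_cdE n j h2 (i - 2^n) hi']
        rw [sgn, if_neg h1, if_pos h2, xr, if_neg h1, if_pos h2, cdE_succ,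
          if_neg (by omega : ¬ xr n j (i - 2^n) + 2^n < 2^n), Nat.add_sub_cancel]
        cases hs : sgn n j (i - 2^n) <;> simp [hs, cd_neg_def, cd_neg_mk]
      · -- case 4 : i, j ≥ 2^n
        have hi' : i - 2^n < 2^n := by omega
        have hj' : j - 2^n < 2^n := by omega
        have hx := xr_lt n (j - 2^n) (i - 2^n) hj' hi'
        rw [cdE_succ, if_neg h1, cdE_succ, if_neg h2]
        show (cdMul n 0 0 - cdMul n (cdE n (j - 2^n)) (cdConj n (cdE n (i - 2^n))),
              cdMul n (cdConj n 0) (cdE n (j - 2^n)) + cdMul n 0 (cdE n (i - 2^n))) = _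
        rw [cdConj_zero n, (cdMul_zero' n 0).1, (cdMul_zero' n _).1, (cdMul_zero' n _).1,
          zero_sub, zero_add, cdConj_cdE n (i - 2^n) hi']
        rw [sgn, if_neg h1, if_neg h2, xr, if_neg h1, if_neg h2, cdE_succ, if_pos hx]
        by_cases h0 : i - 2^n = 0
        · rw [if_pos h0, cdMul_cdE n (j - 2^n) hj' (i - 2^n) hi']
          cases hs : sgn n (j - 2^n) (i - 2^n) <;> simp [h0, hs, cd_neg_def, cd_neg_mk]
        · rw [if_neg h0, (cdMul_neg' n _ _).2, cdMul_cdE n (j - 2^n) hj' (i - 2^n) hi']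
          cases hs : sgn n (j - 2^n) (i - 2^n) <;> simp [h0, hs, cd_neg_def, cd_neg_mk]
lemma xr_comm : ∀ n, ∀ i < 2^n, ∀ j < 2^n, xr n i j = xr n j i
  | 0, i, hi, j, hj => rfl
  | n+1, i, hi, j, hj => by
      rw [pow_succ] at hi hj
      rw [xr, xr]
      by_cases h1 : i < 2^n <;> by_cases h2 : j < 2^n <;>
        simp only [h1, h2, if_true, if_false, if_pos, if_neg, not_false_iff]
      · rw [xr_comm n i h1 j h2]
      · rw [xr_comm n (j - 2^n) (by omega) (i - 2^n) (by omega)]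

lemma xr_assoc : ∀ n, ∀ i < 2^n, ∀ j < 2^n, ∀ k < 2^n,
    xr n (xr n i j) k = xr n i (xr n j k)
  | 0, _, _, _, _, _, _ => rfl
  | n+1, i, hi, j, hj, k, hk => by
      rw [pow_succ] at hi hj hk
      have A := xr_assoc n
      have C := xr_comm n
      have X := xr_lt n
      have ls : ∀ a < 2^n, ∀ b < 2^n, ∀ c < 2^n,
          xr n a (xr n b c) = xr n b (xr n a c) := by
        intro a ha b hb c hc
        rw [← A a ha b hb c hc, C a ha b hb, A b hb a ha c hc]
      have e1 : ∀ a b, a < 2^n → b < 2^n → xr (n+1) a b = xr n a b := by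
        intro a b ha hb; rw [xr, if_pos ha, if_pos hb]
      have e2 : ∀ a b, a < 2^n → b < 2^n → xr (n+1) a (b + 2^n) = xr n a b + 2^n := by
        intro a b ha hb; rw [xr, if_pos ha, if_neg (by omega), Nat.add_sub_cancel]
      have e3 : ∀ a b, a < 2^n → b < 2^n → xr (n+1) (a + 2^n) b = xr n b a + 2^n := by
        intro a b ha hb; rw [xr, if_neg (by omega), if_pos hb, Nat.add_sub_cancel]
      have e4 : ∀ a b, a < 2^n → b < 2^n → xr (n+1) (a + 2^n) (b + 2^n) = xr n b a := by
        intro a b ha hb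
        rw [xr, if_neg (by omega), if_neg (by omega), Nat.add_sub_cancel, Nat.add_sub_cancel]
      by_cases h1 : i < 2^n <;> by_cases h2 : j < 2^n <;> by_cases h3 : k < 2^n
      · rw [e1 i j h1 h2, e1 _ k (X i j h1 h2) h3, e1 j k h2 h3, e1 i _ h1 (X j k h2 h3),
          A i h1 j h2 k h3]
      · obtain ⟨k', rfl⟩ : ∃ k', k = k' + 2^n := ⟨k - 2^n, by omega⟩
        have hk' : k' < 2^n := by omega
        rw [e1 i j h1 h2, e2 _ k' (X i j h1 h2) hk', e2 j k' h2 hk',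
          e2 i _ h1 (X j k' h2 hk'), A i h1 j h2 k' hk']
      · obtain ⟨j', rfl⟩ : ∃ j', j = j' + 2^n := ⟨j - 2^n, by omega⟩
        have hj' : j' < 2^n := by omega
        rw [e2 i j' h1 hj', e3 _ k (X i j' h1 hj') h3, e3 j' k hj' h3,
          e2 i _ h1 (X k j' h3 hj'), ls k h3 i h1 j' hj']
      · obtain ⟨j', rfl⟩ : ∃ j', j = j' + 2^n := ⟨j - 2^n, by omega⟩
        obtain ⟨k', rfl⟩ : ∃ k', k = k' + 2^n := ⟨k - 2^n, by omega⟩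
        have hj' : j' < 2^n := by omega
        have hk' : k' < 2^n := by omega
        rw [e2 i j' h1 hj', e4 _ k' (X i j' h1 hj') hk', e4 j' k' hj' hk',
          e1 i _ h1 (X k' j' hk' hj'), ls k' hk' i h1 j' hj']
      · obtain ⟨i', rfl⟩ : ∃ i', i = i' + 2^n := ⟨i - 2^n, by omega⟩
        have hi' : i' < 2^n := by omega
        rw [e3 i' j hi' h2, e3 _ k (X j i' h2 hi') h3, e1 j k h2 h3,
          e3 i' _ hi' (X j k h2 h3), ls k h3 j h2 i' hi', ← A j h2 k h3 i' hi']
      · obtain ⟨i', rfl⟩ : ∃ i', i = i' + 2^n := ⟨i - 2^n, by omega⟩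
        obtain ⟨k', rfl⟩ : ∃ k', k = k' + 2^n := ⟨k - 2^n, by omega⟩
        have hi' : i' < 2^n := by omega
        have hk' : k' < 2^n := by omega
        rw [e3 i' j hi' h2, e4 _ k' (X j i' h2 hi') hk', e2 j k' h2 hk',
          e4 i' _ hi' (X j k' h2 hk'), ls k' hk' j h2 i' hi', ← A j h2 k' hk' i' hi']
      · obtain ⟨i', rfl⟩ : ∃ i', i = i' + 2^n := ⟨i - 2^n, by omega⟩
        obtain ⟨j', rfl⟩ : ∃ j', j = j' + 2^n := ⟨j - 2^n, by omega⟩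
        have hi' : i' < 2^n := by omega
        have hj' : j' < 2^n := by omega
        rw [e4 i' j' hi' hj', e1 _ k (X j' i' hj' hi') h3, e3 j' k hj' h3,
          e4 i' _ hi' (X k j' h3 hj'), A j' hj' i' hi' k h3,
          A k h3 j' hj' i' hi', ls k h3 j' hj' i' hi', C i' hi' k h3]
      · obtain ⟨i', rfl⟩ : ∃ i', i = i' + 2^n := ⟨i - 2^n, by omega⟩
        obtain ⟨j', rfl⟩ : ∃ j', j = j' + 2^n := ⟨j - 2^n, by omega⟩
        obtain ⟨k', rfl⟩ : ∃ k', k = k' + 2^n := ⟨k - 2^n, by omega⟩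
        have hi' : i' < 2^n := by omega
        have hj' : j' < 2^n := by omega
        have hk' : k' < 2^n := by omega
        rw [e4 i' j' hi' hj', e2 _ k' (X j' i' hj' hi') hk', e4 j' k' hj' hk',
          e3 i' _ hi' (X k' j' hk' hj'), A j' hj' i' hi' k' hk',
          A k' hk' j' hj' i' hi', ls k' hk' j' hj' i' hi', C i' hi' k' hk']
/-! ### TT-level lemmas -/

lemma tt_neg_mul (x y : TT) : (-x) * y = -(x * y) := (cdMul_neg' 5 x y).1
lemma tt_mul_neg (x y : TT) : x * (-y) = -(x * y) := (cdMul_neg' 5 x y).2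

lemma e_mul {i j : ℕ} (hi : i < 32) (hj : j < 32) :
    e i * e j = if sgn 5 i j then e (xr 5 i j) else -e (xr 5 i j) :=
  cdMul_cdE 5 i (by norm_num [hi]) j (by norm_num [hj])

lemma xr_lt32 {i j : ℕ} (hi : i < 32) (hj : j < 32) : xr 5 i j < 32 := by
  have := xr_lt 5 i j (by norm_num [hi]) (by norm_num [hj]); norm_num at this; exact this

lemma e_eq_e {i j : ℕ} (hi : i < 32) (hj : j < 32) (h : e i = e j) : i = j :=
  (cdE_inj' 5 i (by norm_num [hi]) j (by norm_num [hj])).1 h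

lemma e_ne_neg {i j : ℕ} (hi : i < 32) (hj : j < 32) : e i ≠ -e j :=
  (cdE_inj' 5 i (by norm_num [hi]) j (by norm_num [hj])).2

lemma e_idx_eq {i j : ℕ} (hi : i < 32) (hj : j < 32)
    (h : e i = e j ∨ e i = -e j) : i = j := by
  rcases h with h | h
  · exact e_eq_e hi hj h
  · exact absurd h (e_ne_neg hi hj)

/-- Associativity indicator for basis indices. -/
def aIdx (i j k : ℕ) : Bool :=
  (sgn 5 i j == sgn 5 (xr 5 i j) k) == (sgn 5 j k == sgn 5 i (xr 5 j k))

/-- Number of `k ∈ I` associating with the pair `(i, j)`. -/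
def nA (I : Finset ℕ) (i j : ℕ) : ℕ := (I.filter (fun k => aIdx i j k = true)).card

lemma e_mul_assoc_cases {i j k : ℕ} (hi : i < 32) (hj : j < 32) (hk : k < 32) :
    (e i * e j) * e k =
      if aIdx i j k then e i * (e j * e k) else -(e i * (e j * e k)) := by
  have hij := xr_lt32 hi hj
  have hjk := xr_lt32 hj hk
  have hx : xr 5 (xr 5 i j) k = xr 5 i (xr 5 j k) := by
    have := xr_assoc 5 i (by norm_num [hi]) j (by norm_num [hj]) k (by norm_num [hk])
    exact this
  rw [e_mul hi hj, e_mul hj hk]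
  cases h1 : sgn 5 i j <;> cases h2 : sgn 5 j k <;>
    simp only [if_true, if_false, Bool.false_eq_true, tt_neg_mul, tt_mul_neg] <;>
    rw [e_mul hij hk, e_mul hi hjk, hx] <;>
    cases h3 : sgn 5 (xr 5 i j) k <;> cases h4 : sgn 5 i (xr 5 j k) <;>
    simp [aIdx, h1, h2, h3, h4]

lemma prod_form {i j : ℕ} (hi : i < 32) (hj : j < 32) :
    e i * e j = e (xr 5 i j) ∨ e i * e j = -e (xr 5 i j) := by
  rw [e_mul hi hj]; cases h : sgn 5 i j <;> simp

lemma ne_neg_self {m : ℕ} (hm : m < 32) {u : TT} (hu : u = e m ∨ u = -e m) : u ≠ -u := by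
  rcases hu with rfl | rfl
  · exact e_ne_neg hm hm
  · intro h
    rw [neg_neg] at h
    exact e_ne_neg hm hm h.symm

lemma triple_form {i j k : ℕ} (hi : i < 32) (hj : j < 32) (hk : k < 32) :
    e i * (e j * e k) = e (xr 5 i (xr 5 j k)) ∨
      e i * (e j * e k) = -e (xr 5 i (xr 5 j k)) := by
  have hjk := xr_lt32 hj hk
  rcases prod_form hj hk with h | h <;> rw [h]
  · exact prod_form hi hjk
  · rw [tt_mul_neg]
    rcases prod_form hi hjk with h2 | h2 <;> rw [h2]
    · right; rfl
    · left; rw [neg_neg]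

lemma e_mul_assoc_iff {i j k : ℕ} (hi : i < 32) (hj : j < 32) (hk : k < 32) :
    (e i * e j) * e k = e i * (e j * e k) ↔ aIdx i j k = true := by
  have hne : e i * (e j * e k) ≠ -(e i * (e j * e k)) :=
    ne_neg_self (xr_lt32 hi (xr_lt32 hj hk)) (triple_form hi hj hk)
  rw [e_mul_assoc_cases hi hj hk]
  cases h : aIdx i j k <;> simp
  exact fun hh => hne hh.symm
/-- Loop of `± e i` for `i` in a finite index set. -/
def LSet (I : Finset ℕ) : Set TT := {x | ∃ i ∈ I, x = e i ∨ x = -e i}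

lemma isSubloop_LSet (I : Finset ℕ) (h32 : ∀ i ∈ I, i < 32) (h0 : (0:ℕ) ∈ I)
    (hcl : ∀ i ∈ I, ∀ j ∈ I, xr 5 i j ∈ I) : IsSubloop (LSet I) := by
  refine ⟨?_, ⟨e 0, ⟨0, h0, Or.inl rfl⟩⟩, ?_⟩
  · rintro x ⟨i, hi, hx⟩
    exact ⟨i, h32 i hi, hx⟩
  · rintro x ⟨i, hi, hx⟩ y ⟨j, hj, hy⟩
    refine ⟨xr 5 i j, hcl i hi j hj, ?_⟩
    rcases prod_form (h32 i hi) (h32 j hj) with h | h <;>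
      rcases hx with rfl | rfl <;> rcases hy with rfl | rfl <;>
      simp [tt_neg_mul, tt_mul_neg, h]

open scoped Classical in
lemma ncard_LSet (I : Finset ℕ) (h32 : ∀ i ∈ I, i < 32) :
    (LSet I).ncard = 2 * I.card := by
  classical
  have hset : LSet I = ↑(I.image e ∪ I.image (fun i => -e i)) := by
    ext x
    simp only [LSet, Set.mem_setOf_eq, Finset.coe_union, Set.mem_union, Finset.coe_image,
      Set.mem_image, Finset.mem_coe]
    constructor
    · rintro ⟨i, hi, rfl | rfl⟩
      · exact Or.inl ⟨i, hi, rfl⟩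
      · exact Or.inr ⟨i, hi, rfl⟩
    · rintro (⟨i, hi, rfl⟩ | ⟨i, hi, rfl⟩)
      · exact ⟨i, hi, Or.inl rfl⟩
      · exact ⟨i, hi, Or.inr rfl⟩
  rw [hset, Set.ncard_coe_finset]
  rw [Finset.card_union_of_disjoint, Finset.card_image_of_injOn,
    Finset.card_image_of_injOn, two_mul]
  · intro a ha b hb h
    have : -e a = -e b := h
    exact e_eq_e (h32 a ha) (h32 b hb) (neg_inj.mp this)
  · intro a ha b hb h
    exact e_eq_e (h32 a ha) (h32 b hb) h
  · rw [Finset.disjoint_left]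
    rintro x hx hx'
    obtain ⟨a, ha, rfl⟩ := Finset.mem_image.mp hx
    obtain ⟨b, hb, hba⟩ := Finset.mem_image.mp hx'
    exact e_ne_neg (h32 a ha) (h32 b hb) hba.symm
section Transfer

variable {I₁ I₂ : Finset ℕ}

/-- decidable facts about the identity index 0 -/
lemma sgn_zero_left : ∀ i < 32, sgn 5 0 i = true ∧ xr 5 0 i = i := by decide

lemma sgn_diag : ∀ m < 32, m ≠ 0 → (sgn 5 m m = false ∧ xr 5 m m = 0) := by decide

lemma sgn_zz : sgn 5 0 0 = true ∧ xr 5 0 0 = 0 := by decide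

lemma e_zero_mul {x : TT} {i : ℕ} (hi : i < 32) (hx : x = e i ∨ x = -e i) :
    e 0 * x = x ∧ (-e 0) * x = -x := by
  have h1 : e 0 * e i = e i := by
    rw [e_mul (by norm_num) hi, (sgn_zero_left i hi).1, (sgn_zero_left i hi).2, if_pos rfl]
  rcases hx with rfl | rfl
  · exact ⟨h1, by rw [tt_neg_mul, h1]⟩
  · rw [tt_mul_neg, h1, tt_neg_mul, tt_mul_neg, h1]
    exact ⟨rfl, rfl⟩

lemma sq_eq {m : ℕ} (hm : m < 32) {u : TT} (hu : u = e m ∨ u = -e m) :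
    u * u = if m = 0 then e 0 else -e 0 := by
  have : e m * e m = if m = 0 then e 0 else -e 0 := by
    by_cases h0 : m = 0
    · subst h0
      rw [e_mul (by norm_num) (by norm_num), sgn_zz.1, sgn_zz.2, if_pos rfl, if_pos rfl]
    · rw [e_mul hm hm, (sgn_diag m hm h0).1, (sgn_diag m hm h0).2, if_neg h0]
      simp
  rcases hu with rfl | rfl
  · exact this
  · rw [tt_neg_mul, tt_mul_neg, neg_neg, this]

theorem not_loopIso
    (h₁ : ∀ i ∈ I₁, i < 32) (h₂ : ∀ i ∈ I₂, i < 32)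
    (h0₁ : (0:ℕ) ∈ I₁) (h0₂ : (0:ℕ) ∈ I₂)
    (hc₁ : ∀ i ∈ I₁, ∀ j ∈ I₁, xr 5 i j ∈ I₁)
    (m : ℕ) (i₀ j₀ : ℕ) (hi₀ : i₀ ∈ I₁) (hj₀ : j₀ ∈ I₁)
    (hw : nA I₁ i₀ j₀ = m)
    (hno : ∀ i ∈ I₂, ∀ j ∈ I₂, nA I₂ i j ≠ m) :
    ¬ LoopIso (LSet I₁) (LSet I₂) := by
  rintro ⟨f, hbij, hmul⟩
  have memA : ∀ i ∈ I₁, e i ∈ LSet I₁ := fun i hi => ⟨i, hi, Or.inl rfl⟩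
  have memA' : ∀ i ∈ I₁, -e i ∈ LSet I₁ := fun i hi => ⟨i, hi, Or.inr rfl⟩
  have memB : ∀ i ∈ I₂, e i ∈ LSet I₂ := fun i hi => ⟨i, hi, Or.inl rfl⟩
  -- image form
  have himg : ∀ x ∈ LSet I₁, ∃ m ∈ I₂, f x = e m ∨ f x = -e m := fun x hx => hbij.mapsTo hx
  -- f 1 = 1
  have hf1 : f (e 0) = e 0 := by
    obtain ⟨n, hn, hfn⟩ := himg (e 0) (memA 0 h0₁)
    have h00 : e 0 * e 0 = e 0 := by
      have := sq_eq (m := 0) (by norm_num) (Or.inl rfl); simpa using this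
    have hsq : f (e 0) = f (e 0) * f (e 0) := by
      have := hmul (e 0) (memA 0 h0₁) (e 0) (memA 0 h0₁)
      rw [h00] at this; exact this
    have hsq2 : f (e 0) * f (e 0) = if n = 0 then e 0 else -e 0 := sq_eq (h₂ n hn) hfn
    by_cases hn0 : n = 0
    · subst hn0
      rcases hfn with h | h
      · exact h
      · rw [h] at hsq; rw [h] at hsq2
        rw [hsq2, if_pos rfl] at hsq
        exact absurd hsq.symm (e_ne_neg (by norm_num) (by norm_num))
    · rw [hsq2, if_neg hn0] at hsq
      rcases hfn with h | h <;> rw [h] at hsq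
      · exact absurd hsq (e_ne_neg (h₂ n hn) (by norm_num))
      · rw [neg_inj] at hsq
        exact absurd (e_eq_e (h₂ n hn) (by norm_num) hsq) hn0
  -- f (-1) = -1
  have hfm1 : f (-e 0) = -e 0 := by
    obtain ⟨n, hn, hfn⟩ := himg (-e 0) (memA' 0 h0₁)
    have h00 : (-e 0) * (-e 0) = e 0 := by
      have := sq_eq (m := 0) (by norm_num) (Or.inr rfl); simpa using this
    have hsq : f (-e 0) * f (-e 0) = e 0 := by
      have := hmul (-e 0) (memA' 0 h0₁) (-e 0) (memA' 0 h0₁)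
      rw [h00, hf1] at this; exact this.symm
    have hsq2 : f (-e 0) * f (-e 0) = if n = 0 then e 0 else -e 0 := sq_eq (h₂ n hn) hfn
    by_cases hn0 : n = 0
    · subst hn0
      rcases hfn with h | h
      · exfalso
        have : (-e 0 : TT) = e 0 :=
          hbij.injOn (memA' 0 h0₁) (memA 0 h0₁) (by rw [h, hf1])
        exact e_ne_neg (i := 0) (j := 0) (by norm_num) (by norm_num) this.symm
      · exact h
    · rw [hsq2, if_neg hn0] at hsq
      exact absurd hsq.symm (e_ne_neg (by norm_num) (by norm_num))
  -- f commutes with negation on A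
  have hfneg : ∀ x ∈ LSet I₁, f (-x) = -f x := by
    rintro x hx
    obtain ⟨i, hi, hxe⟩ := hx
    have hnx : -x = (-e 0) * x := ((e_zero_mul (h₁ i hi) hxe).2).symm
    have hxA : x ∈ LSet I₁ := ⟨i, hi, hxe⟩
    rw [hnx, hmul (-e 0) (memA' 0 h0₁) x hxA, hfm1]
    obtain ⟨n, hn, hfn⟩ := himg x hxA
    exact (e_zero_mul (h₂ n hn) hfn).2
  -- the induced index map
  have gex : ∀ i ∈ I₁, ∃ n, n ∈ I₂ ∧ (f (e i) = e n ∨ f (e i) = -e n) := by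
    intro i hi
    obtain ⟨n, hn, h⟩ := himg (e i) (memA i hi)
    exact ⟨n, hn, h⟩
  classical
  set g : ℕ → ℕ := fun i => if h : ∃ n, n ∈ I₂ ∧ (f (e i) = e n ∨ f (e i) = -e n)
    then h.choose else 0 with hg_def
  have hg : ∀ i ∈ I₁, g i ∈ I₂ ∧ (f (e i) = e (g i) ∨ f (e i) = -e (g i)) := by
    intro i hi
    rw [hg_def]
    simp only [dif_pos (gex i hi)]
    exact (gex i hi).choose_spec
  -- uniqueness of index representation
  have uniq : ∀ {a b : ℕ}, a < 32 → b < 32 → ∀ {u : TT},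
      (u = e a ∨ u = -e a) → (u = e b ∨ u = -e b) → a = b := by
    intro a b ha hb u hu1 hu2
    rcases hu1 with rfl | h1
    · exact e_idx_eq ha hb hu2
    · rcases hu2 with h2 | h2
      · exact (e_idx_eq hb ha (Or.inr (h1 ▸ h2.symm))).symm
      · rw [h1] at h2
        exact e_idx_eq ha hb (Or.inl (neg_inj.mp h2))
  have hgd : ∀ i ∈ I₁, ∀ n, n < 32 → (f (e i) = e n ∨ f (e i) = -e n) → g i = n := by
    intro i hi n hn hfn
    exact uniq (h₂ _ (hg i hi).1) hn (hg i hi).2 hfn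
  -- g is injective on I₁
  have ginj : ∀ i ∈ I₁, ∀ j ∈ I₁, g i = g j → i = j := by
    intro i hi j hj hij
    have h1 := (hg i hi).2
    have h2 := (hg j hj).2
    rw [hij] at h1
    have : f (e i) = f (e j) ∨ f (e i) = f (-e j) := by
      rw [hfneg (e j) (memA j hj)]
      rcases h1 with ha | ha <;> rcases h2 with hb | hb
      · exact Or.inl (ha.trans hb.symm)
      · exact Or.inr (by rw [ha, hb, neg_neg])
      · exact Or.inr (by rw [ha, hb])
      · exact Or.inl (ha.trans hb.symm)
    rcases this with h | h
    · exact e_eq_e (h₁ i hi) (h₁ j hj) (hbij.injOn (memA i hi) (memA j hj) h)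
    · exact absurd (hbij.injOn (memA i hi) (memA' j hj) h)
        (e_ne_neg (h₁ i hi) (h₁ j hj))
  -- g is surjective onto I₂
  have gsurj : ∀ n ∈ I₂, ∃ i ∈ I₁, g i = n := by
    intro n hn
    obtain ⟨x, hxA, hfx⟩ := hbij.surjOn (memB n hn)
    obtain ⟨i, hi, hxe⟩ := hxA
    refine ⟨i, hi, ?_⟩
    rcases hxe with rfl | rfl
    · exact hgd i hi n (h₂ n hn) (Or.inl hfx)
    · have : f (e i) = -e n := by
        have := hfneg (-e i) (memA' i hi)
        rw [neg_neg] at this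
        rw [this, hfx]
      exact hgd i hi n (h₂ n hn) (Or.inr this)
  -- assoc transfer
  have hassoc : ∀ i ∈ I₁, ∀ j ∈ I₁, ∀ k ∈ I₁, aIdx i j k = aIdx (g i) (g j) (g k) := by
    intro i hi j hj k hk
    have hi32 := h₁ i hi; have hj32 := h₁ j hj; have hk32 := h₁ k hk
    have hgi32 := h₂ _ (hg i hi).1; have hgj32 := h₂ _ (hg j hj).1
    have hgk32 := h₂ _ (hg k hk).1
    have hxy : e i * e j ∈ LSet I₁ := by
      rcases prod_form hi32 hj32 with h | h <;> rw [h]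
      · exact memA _ (hc₁ i hi j hj)
      · exact memA' _ (hc₁ i hi j hj)
    have hyz : e j * e k ∈ LSet I₁ := by
      rcases prod_form hj32 hk32 with h | h <;> rw [h]
      · exact memA _ (hc₁ j hj k hk)
      · exact memA' _ (hc₁ j hj k hk)
    have hL : f ((e i * e j) * e k) = (f (e i) * f (e j)) * f (e k) := by
      rw [hmul (e i * e j) hxy (e k) (memA k hk), hmul (e i) (memA i hi) (e j) (memA j hj)]
    have hR : f (e i * (e j * e k)) = f (e i) * (f (e j) * f (e k)) := by
      rw [hmul (e i) (memA i hi) (e j * e k) hyz, hmul (e j) (memA j hj) (e k) (memA k hk)]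
    -- reduce signed products
    have key : ((e i * e j) * e k = e i * (e j * e k)) ↔
        ((e (g i) * e (g j)) * e (g k) = e (g i) * (e (g j) * e (g k))) := by
      constructor
      · intro h
        have : (f (e i) * f (e j)) * f (e k) = f (e i) * (f (e j) * f (e k)) := by
          rw [← hL, ← hR, h]
        rcases (hg i hi).2 with ha | ha <;> rcases (hg j hj).2 with hb | hb <;>
          rcases (hg k hk).2 with hc | hc <;>
          rw [ha, hb, hc] at this <;>
          exact by simpa only [tt_neg_mul, tt_mul_neg, neg_neg, neg_inj] using this
      · intro h
        by_contra hne
        have hfalse : aIdx i j k = false := by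
          cases hax : aIdx i j k
          · rfl
          · exact absurd ((e_mul_assoc_iff hi32 hj32 hk32).mpr hax) hne
        have hneg : (e i * e j) * e k = -(e i * (e j * e k)) := by
          rw [e_mul_assoc_cases hi32 hj32 hk32, hfalse]
          simp
        have hyzA : e i * (e j * e k) ∈ LSet I₁ := by
          rcases triple_form hi32 hj32 hk32 with hh | hh <;> rw [hh]
          · exact memA _ (hc₁ i hi _ (hc₁ j hj k hk))
          · exact memA' _ (hc₁ i hi _ (hc₁ j hj k hk))
        have : (f (e i) * f (e j)) * f (e k) = -(f (e i) * (f (e j) * f (e k))) := by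
          rw [← hL, ← hR, hneg, hfneg _ hyzA]
        rcases (hg i hi).2 with ha | ha <;> rcases (hg j hj).2 with hb | hb <;>
          rcases (hg k hk).2 with hc | hc <;>
          rw [ha, hb, hc] at this <;>
          (try simp only [tt_neg_mul, tt_mul_neg, neg_neg] at this) <;>
          rw [h] at this <;>
          first
            | exact ne_neg_self (xr_lt32 hgi32 (xr_lt32 hgj32 hgk32))
                (triple_form hgi32 hgj32 hgk32) this
            | exact ne_neg_self (xr_lt32 hgi32 (xr_lt32 hgj32 hgk32))
                (triple_form hgi32 hgj32 hgk32) this.symm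
    have hiff : (aIdx i j k = true) ↔ (aIdx (g i) (g j) (g k) = true) := by
      rw [← e_mul_assoc_iff hi32 hj32 hk32, ← e_mul_assoc_iff hgi32 hgj32 hgk32]
      exact key
    cases h1 : aIdx i j k <;> cases h2 : aIdx (g i) (g j) (g k) <;>
      simp [h1, h2] at hiff ⊢
  -- count transfer
  have hcount : ∀ i ∈ I₁, ∀ j ∈ I₁, nA I₁ i j = nA I₂ (g i) (g j) := by
    intro i hi j hj
    unfold nA
    apply Finset.card_bij (fun k _ => g k)
    · intro k hk
      rw [Finset.mem_filter] at hk ⊢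
      exact ⟨(hg k hk.1).1, by rw [← hassoc i hi j hj k hk.1]; exact hk.2⟩
    · intro a ha b hb hab
      rw [Finset.mem_filter] at ha hb
      exact ginj a ha.1 b hb.1 hab
    · intro n hn
      rw [Finset.mem_filter] at hn
      obtain ⟨i', hi', rfl⟩ := gsurj n hn.1
      refine ⟨i', ?_, rfl⟩
      rw [Finset.mem_filter]
      exact ⟨hi', by rw [hassoc i hi j hj i' hi']; exact hn.2⟩
  exact hno (g i₀) (hg i₀ hi₀).1 (g j₀) (hg j₀ hj₀).1
    (by rw [← hcount i₀ hi₀ j₀ hj₀, hw])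

end Transfer
/-! ### The four index sets -/

def J0 : Finset ℕ := Finset.range 16
def Jα : Finset ℕ := {0, 1, 2, 3, 8, 9, 10, 11, 20, 21, 22, 23, 28, 29, 30, 31}
def Jβ : Finset ℕ := {0, 1, 2, 3, 12, 13, 14, 15, 20, 21, 22, 23, 24, 25, 26, 27}
def Jγ : Finset ℕ := {0, 1, 2, 3, 4, 5, 6, 7, 24, 25, 26, 27, 28, 29, 30, 31}

lemma SL_eq : SL = LSet J0 := by
  ext x
  simp [SL, LSet, J0]

lemma SLα_eq : SLα = LSet Jα := by
  ext x
  simp only [SLα, LSet, Set.mem_setOf_eq, idxα, Jα]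
  constructor <;> rintro ⟨i, hi, hx⟩ <;> refine ⟨i, ?_, hx⟩ <;>
    simp_all <;> tauto

lemma SLβ_eq : SLβ = LSet Jβ := by
  ext x
  simp only [SLβ, LSet, Set.mem_setOf_eq, idxβ, Jβ]
  constructor <;> rintro ⟨i, hi, hx⟩ <;> refine ⟨i, ?_, hx⟩ <;>
    simp_all <;> tauto

lemma SLγ_eq : SLγ = LSet Jγ := by
  ext x
  simp only [SLγ, LSet, Set.mem_setOf_eq, idxγ, Jγ]
  constructor <;> rintro ⟨i, hi, hx⟩ <;> refine ⟨i, ?_, hx⟩ <;>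
    simp_all <;> tauto

section Facts

set_option maxHeartbeats 1000000

lemma J0_facts : (∀ i ∈ J0, i < 32) ∧ (0:ℕ) ∈ J0 ∧ (∀ i ∈ J0, ∀ j ∈ J0, xr 5 i j ∈ J0)
    ∧ J0.card = 16 := by decide
lemma Jα_facts : (∀ i ∈ Jα, i < 32) ∧ (0:ℕ) ∈ Jα ∧ (∀ i ∈ Jα, ∀ j ∈ Jα, xr 5 i j ∈ Jα)
    ∧ Jα.card = 16 := by decide
lemma Jβ_facts : (∀ i ∈ Jβ, i < 32) ∧ (0:ℕ) ∈ Jβ ∧ (∀ i ∈ Jβ, ∀ j ∈ Jβ, xr 5 i j ∈ Jβ)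
    ∧ Jβ.card = 16 := by decide
lemma Jγ_facts : (∀ i ∈ Jγ, i < 32) ∧ (0:ℕ) ∈ Jγ ∧ (∀ i ∈ Jγ, ∀ j ∈ Jγ, xr 5 i j ∈ Jγ)
    ∧ Jγ.card = 16 := by decide

lemma w0 : nA J0 1 8 = 4 ∧ (1:ℕ) ∈ J0 ∧ (8:ℕ) ∈ J0 := by decide
lemma wα8 : nA Jα 1 2 = 8 ∧ (1:ℕ) ∈ Jα ∧ (2:ℕ) ∈ Jα := by decide
lemma wα12 : nA Jα 1 8 = 12 ∧ (8:ℕ) ∈ Jα := by decide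
lemma wβ14 : nA Jβ 1 26 = 14 ∧ (1:ℕ) ∈ Jβ ∧ (26:ℕ) ∈ Jβ := by decide

lemma noα4 : ∀ i ∈ Jα, ∀ j ∈ Jα, nA Jα i j ≠ 4 := by decide
lemma noβ4 : ∀ i ∈ Jβ, ∀ j ∈ Jβ, nA Jβ i j ≠ 4 := by decide
lemma noγ4 : ∀ i ∈ Jγ, ∀ j ∈ Jγ, nA Jγ i j ≠ 4 := by decide
lemma noβ8 : ∀ i ∈ Jβ, ∀ j ∈ Jβ, nA Jβ i j ≠ 8 := by decide
lemma noγ12 : ∀ i ∈ Jγ, ∀ j ∈ Jγ, nA Jγ i j ≠ 12 := by decide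
lemma noγ14 : ∀ i ∈ Jγ, ∀ j ∈ Jγ, nA Jγ i j ≠ 14 := by decide

end Facts


/-- The four 32-element sets `S_L`, `S_L^α`, `S_L^β`, `S_L^γ` are subloops of `T_L`
and are pairwise non-isomorphic. -/
theorem stmt8 :
    SL.ncard = 32 ∧ SLα.ncard = 32 ∧ SLβ.ncard = 32 ∧ SLγ.ncard = 32 ∧
    IsSubloop SL ∧ IsSubloop SLα ∧ IsSubloop SLβ ∧ IsSubloop SLγ ∧
    ¬ LoopIso SL SLα ∧ ¬ LoopIso SL SLβ ∧ ¬ LoopIso SL SLγ ∧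
    ¬ LoopIso SLα SLβ ∧ ¬ LoopIso SLα SLγ ∧ ¬ LoopIso SLβ SLγ := by
  obtain ⟨b0, z0, c0, k0⟩ := J0_facts
  obtain ⟨bα, zα, cα, kα⟩ := Jα_facts
  obtain ⟨bβ, zβ, cβ, kβ⟩ := Jβ_facts
  obtain ⟨bγ, zγ, cγ, kγ⟩ := Jγ_facts
  rw [SL_eq, SLα_eq, SLβ_eq, SLγ_eq]
  refine ⟨?_, ?_, ?_, ?_, ?_, ?_, ?_, ?_, ?_, ?_, ?_, ?_, ?_, ?_⟩
  · rw [ncard_LSet J0 b0, k0]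
  · rw [ncard_LSet Jα bα, kα]
  · rw [ncard_LSet Jβ bβ, kβ]
  · rw [ncard_LSet Jγ bγ, kγ]
  · exact isSubloop_LSet J0 b0 z0 c0
  · exact isSubloop_LSet Jα bα zα cα
  · exact isSubloop_LSet Jβ bβ zβ cβ
  · exact isSubloop_LSet Jγ bγ zγ cγ
  · exact not_loopIso b0 bα z0 zα c0 4 1 8 w0.2.1 w0.2.2 w0.1 noα4
  · exact not_loopIso b0 bβ z0 zβ c0 4 1 8 w0.2.1 w0.2.2 w0.1 noβ4
  · exact not_loopIso b0 bγ z0 zγ c0 4 1 8 w0.2.1 w0.2.2 w0.1 noγ4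
  · exact not_loopIso bα bβ zα zβ cα 8 1 2 wα8.2.1 wα8.2.2 wα8.1 noβ8
  · exact not_loopIso bα bγ zα zγ cα 12 1 8 wα8.2.1 wα12.2 wα12.1 noγ12
  · exact not_loopIso bβ bγ zβ zγ cβ 14 1 26 wβ14.2.1 wβ14.2.2 wβ14.1 noγ14

end Aux
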